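/- arXiv:0904.0203 — 7 statements merged into one kernel-verified Lean document; each statement's English description precedes it below -/
import Mathlib

section
/- If φ ∈ H₁ satisfies h₁φ = εφ for some scalar ε and X†φ ≠ 0, then h₂(X†φ) = ε(X†φ); that is, X†φ is an eigenvector of h₂ := N₂⁻¹ ∘ (X† ∘ h₁ ∘ X) with the same eigenvalue ε. -/
open ContinuousLinearMap

theorem stmt_2
    {H₁ H₂ : Type*}
    [NormedAddCommGroup H₁] [InnerProductSpace ℂ H₁] [CompleteSpace H₁]
    [NormedAddCommGroup H₂] [InnerProductSpace ℂ H₂] [CompleteSpace H₂]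
    (X : H₂ →L[ℂ] H₁) (h₁ : H₁ →L[ℂ] H₁)
    (hsa : IsSelfAdjoint h₁)
    (hcomm : (X ∘L adjoint X) ∘L h₁ = h₁ ∘L (X ∘L adjoint X))
    (N₂inv : H₂ →L[ℂ] H₂)
    (hinv₁ : (adjoint X ∘L X) ∘L N₂inv = 1)
    (hinv₂ : N₂inv ∘L (adjoint X ∘L X) = 1)
    (φ : H₁) (ε : ℂ)
    (heig : h₁ φ = ε • φ) (hne : adjoint X φ ≠ 0) :
    (N₂inv ∘L (adjoint X ∘L h₁ ∘L X)) (adjoint X φ) = ε • (adjoint X φ) := by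
  have h1 : h₁ (X (adjoint X φ)) = ε • X (adjoint X φ) := by
    have := congrArg (fun T => T φ) hcomm.symm
    simp only [comp_apply] at this
    rw [this, heig]
    simp [map_smul]
  have h2 : N₂inv ((adjoint X ∘L X) (ε • adjoint X φ)) = ε • adjoint X φ := by
    have := congrArg (fun T => T (ε • adjoint X φ)) hinv₂
    simpa [comp_apply] using this
  simp only [comp_apply] at h2 ⊢
  rw [h1]
  simpa [map_smul] using h2
end

section
/- If in addition N₁ is invertible in the algebra of bounded operators on H₁, then the strong intertwining relation X ∘ h₂ = h₁ ∘ X holds, where h₂ := N₂⁻¹ ∘ (X† ∘ h₁ ∘ X). -/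
open ContinuousLinearMap

theorem stmt_5
    {H₁ H₂ : Type*}
    [NormedAddCommGroup H₁] [InnerProductSpace ℂ H₁] [CompleteSpace H₁]
    [NormedAddCommGroup H₂] [InnerProductSpace ℂ H₂] [CompleteSpace H₂]
    (X : H₂ →L[ℂ] H₁) (h₁ : H₁ →L[ℂ] H₁)
    (hsa : IsSelfAdjoint h₁)
    (hcomm : (X ∘L adjoint X) ∘L h₁ = h₁ ∘L (X ∘L adjoint X))
    (N₂inv : H₂ →L[ℂ] H₂)
    (hinv₁ : (adjoint X ∘L X) ∘L N₂inv = 1)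
    (hinv₂ : N₂inv ∘L (adjoint X ∘L X) = 1)
    (N₁inv : H₁ →L[ℂ] H₁)
    (hinv₃ : (X ∘L adjoint X) ∘L N₁inv = 1)
    (hinv₄ : N₁inv ∘L (X ∘L adjoint X) = 1) :
    X ∘L (N₂inv ∘L (adjoint X ∘L h₁ ∘L X)) = h₁ ∘L X := by
  simp only [ContinuousLinearMap.ext_iff, comp_apply, one_apply] at hcomm hinv₁ hinv₂ hinv₃ hinv₄ ⊢
  intro x
  calc X (N₂inv (adjoint X (h₁ (X x))))
      = N₁inv (X (adjoint X (X (N₂inv (adjoint X (h₁ (X x))))))) := (hinv₄ _).symm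
    _ = N₁inv (X (adjoint X (h₁ (X x)))) := by rw [hinv₁]; rfl
    _ = h₁ (X x) := hinv₄ _
end

section
/- Suppose φ ∈ H₁ is nonzero with h₁φ = εφ and X†φ ≠ 0, and suppose the eigenvalue ε is non-degenerate, i.e. every ψ ∈ H₁ with h₁ψ = εψ is a scalar multiple of φ. Then there exists a scalar α such that N₁φ = αφ and N₂(X†φ) = α(X†φ); that is, φ and X†φ are eigenvectors of N₁ and N₂ respectively with the same eigenvalue. -/
open ContinuousLinearMap

theorem stmt_8
    {H₁ H₂ : Type*}
    [NormedAddCommGroup H₁] [InnerProductSpace ℂ H₁] [CompleteSpace H₁]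
    [NormedAddCommGroup H₂] [InnerProductSpace ℂ H₂] [CompleteSpace H₂]
    (X : H₂ →L[ℂ] H₁) (h₁ : H₁ →L[ℂ] H₁)
    (hsa : IsSelfAdjoint h₁)
    (hcomm : (X ∘L adjoint X) ∘L h₁ = h₁ ∘L (X ∘L adjoint X))
    (N₂inv : H₂ →L[ℂ] H₂)
    (hinv₁ : (adjoint X ∘L X) ∘L N₂inv = 1)
    (hinv₂ : N₂inv ∘L (adjoint X ∘L X) = 1)
    (φ : H₁) (ε : ℂ)
    (hφ : φ ≠ 0)
    (heig : h₁ φ = ε • φ) (hne : adjoint X φ ≠ 0)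
    (hnondeg : ∀ ψ : H₁, h₁ ψ = ε • ψ → ∃ c : ℂ, ψ = c • φ) :
    ∃ α : ℂ, (X ∘L adjoint X) φ = α • φ ∧
      (adjoint X ∘L X) (adjoint X φ) = α • (adjoint X φ) := by
  have h1 : h₁ ((X ∘L adjoint X) φ) = ε • ((X ∘L adjoint X) φ) := by
    have := congrArg (fun T : H₁ →L[ℂ] H₁ => T φ) hcomm
    simp only [comp_apply] at this ⊢
    rw [← this, heig, map_smul, map_smul]
  obtain ⟨α, hα⟩ := hnondeg _ h1
  refine ⟨α, hα, ?_⟩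
  have : (adjoint X ∘L X) (adjoint X φ) = adjoint X ((X ∘L adjoint X) φ) := by
    simp [comp_apply]
  rw [this, hα, map_smul]
end

section
/- The operator h₁ := N₁⁻¹ ∘ (X ∘ h₂ ∘ X†) is self-adjoint on H₁, satisfies the weak intertwining relation X ∘ (X† ∘ h₁ − h₂ ∘ X†) = 0, and commutes with N₁ (h₁N₁ = N₁h₁). -/
open ContinuousLinearMap

theorem stmt_9
    {H₁ H₂ : Type*}
    [NormedAddCommGroup H₁] [InnerProductSpace ℂ H₁] [CompleteSpace H₁]
    [NormedAddCommGroup H₂] [InnerProductSpace ℂ H₂] [CompleteSpace H₂]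
    (X : H₂ →L[ℂ] H₁) (h₂ : H₂ →L[ℂ] H₂)
    (hsa : IsSelfAdjoint h₂)
    (hcomm : (adjoint X ∘L X) ∘L h₂ = h₂ ∘L (adjoint X ∘L X))
    (N₁inv : H₁ →L[ℂ] H₁)
    (hinv₁ : (X ∘L adjoint X) ∘L N₁inv = 1)
    (hinv₂ : N₁inv ∘L (X ∘L adjoint X) = 1) :
    IsSelfAdjoint (N₁inv ∘L (X ∘L h₂ ∘L adjoint X)) ∧
    X ∘L (adjoint X ∘L (N₁inv ∘L (X ∘L h₂ ∘L adjoint X)) - h₂ ∘L adjoint X) = 0 ∧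
    (N₁inv ∘L (X ∘L h₂ ∘L adjoint X)) ∘L (X ∘L adjoint X)
      = (X ∘L adjoint X) ∘L (N₁inv ∘L (X ∘L h₂ ∘L adjoint X)) := by
  set A := X ∘L h₂ ∘L adjoint X with hAdef
  have hsa' : adjoint h₂ = h₂ := by
    rw [← ContinuousLinearMap.star_eq_adjoint]; exact hsa
  have hAsa : adjoint A = A := by
    rw [hAdef]
    simp [adjoint_comp, adjoint_adjoint, hsa', comp_assoc]
  have hcp : ∀ y, adjoint X (X (h₂ y)) = h₂ (adjoint X (X y)) := by
    intro y
    have := congrArg (fun T : H₂ →L[ℂ] H₂ => T y) hcomm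
    simpa using this
  have hinvp : ∀ x, X (adjoint X (N₁inv x)) = x := by
    intro x
    have := congrArg (fun T : H₁ →L[ℂ] H₁ => T x) hinv₁
    simpa using this
  have hinvp2 : ∀ x, N₁inv (X (adjoint X x)) = x := by
    intro x
    have := congrArg (fun T : H₁ →L[ℂ] H₁ => T x) hinv₂
    simpa using this
  have hNinv_sa : adjoint N₁inv = N₁inv := by
    have ha1 : adjoint (1 : H₁ →L[ℂ] H₁) = 1 := by
      rw [← ContinuousLinearMap.star_eq_adjoint]; exact star_one _
    have h1 : (X ∘L adjoint X) ∘L adjoint N₁inv = 1 := by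
      have := congrArg adjoint hinv₂
      simpa [adjoint_comp, adjoint_adjoint, comp_assoc, ha1] using this
    calc adjoint N₁inv = (N₁inv ∘L (X ∘L adjoint X)) ∘L adjoint N₁inv := by
          rw [hinv₂]; rfl
      _ = N₁inv ∘L ((X ∘L adjoint X) ∘L adjoint N₁inv) := by rw [comp_assoc]
      _ = N₁inv := by rw [h1]; rfl
  have hA : (X ∘L adjoint X) ∘L A = A ∘L (X ∘L adjoint X) := by
    ext x
    simp only [hAdef, comp_apply, coe_comp', Function.comp_apply]
    rw [hcp]
  have key : N₁inv ∘L A = A ∘L N₁inv := by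
    ext x
    simp only [hAdef, comp_apply, coe_comp', Function.comp_apply]
    calc N₁inv (X (h₂ (adjoint X x)))
        = N₁inv (X (h₂ (adjoint X (X (adjoint X (N₁inv x)))))) := by rw [hinvp x]
      _ = N₁inv (X (adjoint X (X (h₂ (adjoint X (N₁inv x)))))) := by rw [← hcp]
      _ = X (h₂ (adjoint X (N₁inv x))) := hinvp2 _
  refine ⟨?_, ?_, ?_⟩
  · rw [ContinuousLinearMap.isSelfAdjoint_iff', adjoint_comp, hAsa, hNinv_sa, key]
  · ext x
    simp only [comp_apply, coe_comp', Function.comp_apply, coe_sub', Pi.sub_apply,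
      map_sub, zero_apply]
    rw [hinvp]
    simp [hAdef, comp_apply]
  · have e1 : (N₁inv ∘L A) ∘L (X ∘L adjoint X) = A := by
      rw [comp_assoc, ← hA, ← comp_assoc, hinv₂]; rfl
    have e2 : (X ∘L adjoint X) ∘L (N₁inv ∘L A) = A := by
      rw [← comp_assoc, hinv₁]; rfl
    rw [e1, e2]
end

section
/- If ψ ∈ H₂ satisfies h₂ψ = εψ for some scalar ε and Xψ ≠ 0, then h₁(Xψ) = ε(Xψ); that is, Xψ is an eigenvector of h₁ := N₁⁻¹ ∘ (X ∘ h₂ ∘ X†) with the same eigenvalue ε. -/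
open ContinuousLinearMap

theorem stmt_10
    {H₁ H₂ : Type*}
    [NormedAddCommGroup H₁] [InnerProductSpace ℂ H₁] [CompleteSpace H₁]
    [NormedAddCommGroup H₂] [InnerProductSpace ℂ H₂] [CompleteSpace H₂]
    (X : H₂ →L[ℂ] H₁) (h₂ : H₂ →L[ℂ] H₂)
    (hsa : IsSelfAdjoint h₂)
    (hcomm : (adjoint X ∘L X) ∘L h₂ = h₂ ∘L (adjoint X ∘L X))
    (N₁inv : H₁ →L[ℂ] H₁)
    (hinv₁ : (X ∘L adjoint X) ∘L N₁inv = 1)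
    (hinv₂ : N₁inv ∘L (X ∘L adjoint X) = 1)
    (ψ : H₂) (ε : ℂ)
    (heig : h₂ ψ = ε • ψ) (hne : X ψ ≠ 0) :
    (N₁inv ∘L (X ∘L h₂ ∘L adjoint X)) (X ψ) = ε • (X ψ) := by
  have key : h₂ ((adjoint X) (X ψ)) = ε • ((adjoint X) (X ψ)) := by
    have h1 : ((adjoint X ∘L X) ∘L h₂) ψ = (h₂ ∘L (adjoint X ∘L X)) ψ := by rw [hcomm]
    simp only [comp_apply, heig, map_smul] at h1 ⊢
    exact h1.symm
  have h2 : (X ∘L h₂ ∘L adjoint X) (X ψ) = (X ∘L adjoint X) (ε • X ψ) := by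
    simp [comp_apply, key, map_smul]
  rw [comp_apply, h2, ← comp_apply N₁inv, hinv₂]
  simp
end

section
/- Let χ : ℕ × Fin 2 → H be given by χ(n,i) = (1/√2)·eₙ, and let α, β be real numbers. Denote by σ the involution of ℕ × Fin 2 swapping (n,0) ↔ (n,1). Then for every f ∈ H, the family (α·⟨χ(p), f⟩ + β·⟨χ(σ(p)), f⟩)·χ(p), indexed by p ∈ ℕ × Fin 2, is summable in H with sum (α+β)·f. (This expresses that the operator h₂ = F†(α·1 + β·P₂)F on H, where F is the analysis operator of the frame (χ(p)) and P₂ is the pair-swap operator on ℓ², equals (α+β) times the identity.) -/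
open scoped InnerProductSpace

theorem stmt_14
    {H : Type*} [NormedAddCommGroup H] [InnerProductSpace ℂ H] [CompleteSpace H]
    (e : HilbertBasis ℕ ℂ H)
    (α β : ℝ)
    (χ : ℕ × Fin 2 → H)
    (hχ : ∀ p : ℕ × Fin 2, χ p = (Real.sqrt 2)⁻¹ • e p.1)
    (σ : ℕ × Fin 2 → ℕ × Fin 2)
    (hσ : ∀ p : ℕ × Fin 2, σ p = (p.1, 1 - p.2)) :
    ∀ f : H, HasSum
      (fun p : ℕ × Fin 2 =>
        ((α : ℂ) * ⟪χ p, f⟫_ℂ + (β : ℂ) * ⟪χ (σ p), f⟫_ℂ) • χ p)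
      ((α + β) • f) := by
  intro f
  set F : ℕ × Fin 2 → H := fun p =>
    ((α : ℂ) * ⟪χ p, f⟫_ℂ + (β : ℂ) * ⟪χ (σ p), f⟫_ℂ) • χ p with hF
  set c : ℂ := ((α : ℂ) + β) / 2 with hc
  have h2 : ((Real.sqrt 2 : ℝ) : ℂ)⁻¹ * ((Real.sqrt 2 : ℝ) : ℂ)⁻¹ = 1 / 2 := by
    rw [← mul_inv, ← Complex.ofReal_mul, Real.mul_self_sqrt (by norm_num)]
    norm_num
  have hFg : ∀ p : ℕ × Fin 2, F p = (c * ⟪e p.1, f⟫_ℂ) • e p.1 := by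
    intro p
    have hs : χ (σ p) = χ p := by rw [hχ, hχ, hσ]
    have hr : (Real.sqrt 2)⁻¹ • e p.1 = (((Real.sqrt 2 : ℝ) : ℂ))⁻¹ • e p.1 := by
      rw [← Complex.ofReal_inv, Complex.coe_smul]
    rw [hF]
    simp only [hs, hχ p, hr, inner_smul_left, smul_smul]
    rw [map_inv₀, Complex.conj_ofReal, hc]
    have h2' : ((Real.sqrt 2 : ℝ) : ℂ)⁻¹ ^ 2 = 1 / 2 := by rw [sq]; exact h2
    ring_nf
    rw [h2']
    ring_nf
  have hg : HasSum (fun n : ℕ => (c * ⟪e n, f⟫_ℂ) • e n) (c • f) := by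
    have := (e.hasSum_repr f).const_smul c
    simp only [smul_smul] at this
    convert this using 2 with n
    rw [e.repr_apply_apply]
  -- split the index set into the two fibers over Fin 2
  have hcompl : IsCompl {p : ℕ × Fin 2 | p.2 = 0} {p : ℕ × Fin 2 | p.2 = 1} := by
    constructor
    · rw [Set.disjoint_left]
      rintro ⟨n, i⟩ h0 h1
      simp_all
    · rw [codisjoint_iff_le_sup]
      rintro ⟨n, i⟩ -
      simp only [Set.sup_eq_union, Set.mem_union, Set.mem_setOf_eq]
      omega
  have key : ∀ i : Fin 2, HasSum (fun q : {p : ℕ × Fin 2 | p.2 = i} => F q) (c • f) := by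
    intro i
    let ε : ℕ ≃ {p : ℕ × Fin 2 | p.2 = i} :=
      { toFun := fun n => ⟨(n, i), rfl⟩
        invFun := fun q => q.1.1
        left_inv := fun n => rfl
        right_inv := fun q => Subtype.ext (Prod.ext rfl q.2.symm) }
    refine ε.hasSum_iff.mp ?_
    have : (fun n : ℕ => F (ε n)) = fun n : ℕ => (c * ⟪e n, f⟫_ℂ) • e n := by
      funext n; exact hFg (n, i)
    show HasSum (fun n : ℕ => F (ε n)) (c • f)
    rw [this]; exact hg
  have hsum : HasSum F (c • f + c • f) :=
    HasSum.add_isCompl hcompl (key 0) (key 1)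
  have : c • f + c • f = ((α + β : ℝ)) • f := by
    rw [← add_smul, ← Complex.coe_smul]
    congr 1
    push_cast [hc]
    ring
  rwa [this] at hsum
end

section
/- For every f ∈ H, the family (‖Λⱼ(S⁻¹f)‖²)_{j∈J} is summable and its sum lies between (1/B)‖f‖² and (1/A)‖f‖²; that is, the dual family Λ̃ⱼ = Λⱼ ∘ S⁻¹ is a (1/B, 1/A) g-frame of (H, K). -/
open ContinuousLinearMap

theorem stmt_19
    {H K : Type*}
    [NormedAddCommGroup H] [InnerProductSpace ℂ H] [CompleteSpace H]
    [NormedAddCommGroup K] [InnerProductSpace ℂ K] [CompleteSpace K]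
    {J : Type*} [Countable J]
    (Λ : J → (H →L[ℂ] K))
    (A B : ℝ) (hA : 0 < A) (hAB : A ≤ B)
    (S : H →L[ℂ] H) (hsa : IsSelfAdjoint S)
    (Sinv : H →L[ℂ] H) (hinv₁ : S ∘L Sinv = 1) (hinv₂ : Sinv ∘L S = 1)
    (hsum : ∀ f : H, HasSum (fun j => ‖Λ j f‖ ^ 2) ((inner ℂ f (S f) : ℂ).re))
    (hlow : ∀ f : H, A * ‖f‖ ^ 2 ≤ (inner ℂ f (S f) : ℂ).re)
    (hup : ∀ f : H, (inner ℂ f (S f) : ℂ).re ≤ B * ‖f‖ ^ 2) :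
    ∀ f : H, Summable (fun j => ‖Λ j (Sinv f)‖ ^ 2) ∧
      (1 / B) * ‖f‖ ^ 2 ≤ (∑' j, ‖Λ j (Sinv f)‖ ^ 2) ∧
      (∑' j, ‖Λ j (Sinv f)‖ ^ 2) ≤ (1 / A) * ‖f‖ ^ 2 := by
  have hB : 0 < B := lt_of_lt_of_le hA hAB
  intro f
  set g := Sinv f with hg
  have hSg : S g = f := by
    have := congrFun (congrArg DFunLike.coe hinv₁) f
    simpa using this
  have hsum' := hsum g
  have hsumm : Summable (fun j => ‖Λ j (Sinv f)‖ ^ 2) := hsum'.summable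
  have hts : (∑' j, ‖Λ j (Sinv f)‖ ^ 2) = (inner ℂ g (S g) : ℂ).re := hsum'.tsum_eq
  set P : ℝ := (inner ℂ g (S g) : ℂ).re with hP
  have hnn : ∀ u : H, 0 ≤ (inner ℂ u (S u) : ℂ).re := fun u =>
    le_trans (by positivity) (hlow u)
  have hPnn : 0 ≤ P := hnn g
  have hsymm := hsa.isSymmetric
  have h1 : (inner ℂ g (S f) : ℂ) = (‖f‖ : ℂ) ^ 2 := by
    have hs := hsymm g f
    simp only [ContinuousLinearMap.coe_coe] at hs
    rw [← hs, hSg, inner_self_eq_norm_sq_to_K]; norm_num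
  have h2 : (inner ℂ f (S g) : ℂ) = (‖f‖ : ℂ) ^ 2 := by
    rw [hSg, inner_self_eq_norm_sq_to_K]; norm_num
    
  have hquad : ∀ t : ℝ, 0 ≤ (inner ℂ f (S f) : ℂ).re * (t * t) + (-(2 * ‖f‖ ^ 2)) * t + P := by
    intro t
    have h0 := hnn (g - (t : ℂ) • f)
    have hexp : (inner ℂ (g - (t:ℂ) • f) (S (g - (t:ℂ) • f)) : ℂ).re
        = (inner ℂ f (S f) : ℂ).re * (t * t) + (-(2 * ‖f‖ ^ 2)) * t + P := by
      simp only [map_sub, map_smul, inner_sub_left, inner_sub_right,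
        inner_smul_left, inner_smul_right, h1, h2]
      simp [Complex.sub_re, Complex.mul_re, Complex.conj_re, Complex.conj_im,
        ← Complex.ofReal_pow, Complex.ofReal_re, hP]
      ring
    linarith [hexp ▸ h0]
  have key : ‖f‖ ^ 4 ≤ (inner ℂ f (S f) : ℂ).re * P := by
    have hd := discrim_le_zero hquad
    rw [discrim] at hd
    nlinarith [hd]
  refine ⟨hsumm, ?_, ?_⟩
  · -- lower bound
    rw [hts]
    rcases eq_or_ne f 0 with rfl | hf
    · simpa using hPnn
    · have hf' : 0 < ‖f‖ := norm_pos_iff.mpr hf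
      have hBf := hup f
      rw [div_mul_eq_mul_div, div_le_iff₀ hB]
      nlinarith [key, mul_le_mul_of_nonneg_right hBf hPnn, pow_pos hf' 2, sq_nonneg ‖f‖]
  · -- upper bound
    rw [hts]
    have hPf : P = (inner ℂ g f : ℂ).re := by rw [hP, hSg]
    have hcs : (inner ℂ g f : ℂ).re ≤ ‖g‖ * ‖f‖ := by
      have := re_inner_le_norm (𝕜 := ℂ) g f
      simpa [RCLike.re_to_complex] using this
    have hlg : A * ‖g‖ ^ 2 ≤ P := hlow g
    rw [div_mul_eq_mul_div, le_div_iff₀ hA]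
    nlinarith [hcs, hlg, norm_nonneg g, norm_nonneg f, hPf, sq_nonneg (A * ‖g‖ - ‖f‖)]
end
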